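/- For every cyclic unimodal permutation σ of {1,…,n}, the binary string A(σ) is either primitive of length n (with an even number of 1's), or consists of two copies of a primitive string of length n/2 with an odd number of 1's; in other words, the necklace φ(σ) := ⟨A(σ)⟩ belongs to Ñ⁺(n). -/

import Mathlib

open Finset

namespace Necklaces

variable {n : ℕ}

/-- The cyclic left shift `L` on binary strings of length `n`. -/
def shiftL (s : Fin n → Bool) : Fin n → Bool :=
  fun i => s ⟨(i.val + 1) % n, Nat.mod_lt _ (Nat.lt_of_le_of_lt (Nat.zero_le _) i.isLt)⟩

/-- Digitwise inversion (complement) `ι`. -/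
def inv (s : Fin n → Bool) : Fin n → Bool := fun i => !(s i)

/-- A string is primitive if no nontrivial cyclic shift fixes it. -/
def Primitive (s : Fin n → Bool) : Prop :=
  ∀ k : ℕ, 0 < k → k < n → shiftL^[k] s ≠ s

/-- The necklace `⟨s⟩`: the orbit of `s` under cyclic shifts. -/
def necklace (s : Fin n → Bool) : Set (Fin n → Bool) :=
  {t | ∃ k : ℕ, t = shiftL^[k] s}

/-- The necklace inversion class `[s]`: the orbit of `s` under cyclic shifts and inversion. -/
def invClass (s : Fin n → Bool) : Set (Fin n → Bool) :=
  {t | ∃ k : ℕ, t = shiftL^[k] s ∨ t = inv (shiftL^[k] s)}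

/-- The number of 1's in `s`. -/
def onesCard (s : Fin n → Bool) : ℕ := (univ.filter (fun i => s i = true)).card

/-- The mod-2 partial sum map `Ξ`: the `i`-th digit of `Ξ(s)` is `s₁+⋯+sᵢ (mod 2)`. -/
def xi (s : Fin n → Bool) : Fin n → Bool :=
  fun i => decide (Odd ((Finset.Iic i).filter (fun j => s j = true)).card)

/-- `ι(s)` is a cyclic shift of `s`. -/
def ReflexiveStr (s : Fin n → Bool) : Prop := ∃ k : ℕ, shiftL^[k] s = inv s

/-- `s` consists of two copies of a primitive string of length `n/2`
with an odd number of 1's. -/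
def TwoCopies (s : Fin n → Bool) : Prop :=
  n % 2 = 0 ∧ shiftL^[n / 2] s = s ∧ (∀ k : ℕ, 0 < k → k < n / 2 → shiftL^[k] s ≠ s) ∧
    Odd ((univ.filter (fun i : Fin n => i.val < n / 2 ∧ s i = true)).card)

/-- `s` generates a necklace belonging to `Ñ⁺(n)`. -/
def GoodPlus (s : Fin n → Bool) : Prop :=
  (Primitive s ∧ Even (onesCard s)) ∨ TwoCopies s

/-- The set `Ñ⁺(n)` of necklaces. -/
def NtildePlus (n : ℕ) : Set (Set (Fin n → Bool)) :=
  {N | ∃ s : Fin n → Bool, GoodPlus s ∧ N = necklace s}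

/-- The set `N̄(n)` of necklace inversion classes of primitive strings. -/
def Nbar (n : ℕ) : Set (Set (Fin n → Bool)) :=
  {C | ∃ s : Fin n → Bool, Primitive s ∧ C = invClass s}

/-- Lexicographic order on strings, with `0 < 1` and the leftmost digit most significant. -/
def strLt (s t : Fin n → Bool) : Prop :=
  ∃ i : Fin n, (∀ j : Fin n, j < i → s j = t j) ∧ s i < t i

/-- Extended lexicographic order on extended strings `s^b`
(`b = false` encodes `−`, `b = true` encodes `+`). -/
def extLt (p q : (Fin n → Bool) × Bool) : Prop :=
  strLt p.1 q.1 ∨ (p.1 = q.1 ∧ p.2 < q.2)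

/-- The twisted shift operator `F`. -/
def twistF (s : Fin n → Bool) : Fin n → Bool :=
  if h : 0 < n then
    (if shiftL s ⟨0, h⟩ = true then shiftL s else inv (shiftL s))
  else s

/-- The extended twisted shift operator `F̃`. -/
def extF (p : (Fin n → Bool) × Bool) : (Fin n → Bool) × Bool :=
  if h : 0 < n then
    (if twistF p.1 ⟨n - 1, Nat.sub_lt h Nat.one_pos⟩ = true then (twistF p.1, p.2)
     else (twistF p.1, !p.2))
  else p

/-- Cyclic successor on `Fin n`. -/
def finSucc (i : Fin n) : Fin n :=
  ⟨(i.val + 1) % n, Nat.mod_lt _ (Nat.lt_of_le_of_lt (Nat.zero_le _) i.isLt)⟩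

open scoped Classical in
/-- The (0-based) lexicographic rank of `μ i` among `μ₁,…,μₙ`:
the number of indices `j` with `μ j` strictly smaller than `μ i`. -/
noncomputable def rankOf {X : Type*} (lt : X → X → Prop) (μ : Fin n → X) (i : Fin n) : ℕ :=
  (univ.filter (fun j => lt (μ j) (μ i))).card

/-- `σ` is the cyclic permutation `(r₁ r₂ ⋯ rₙ)` built from the ranks `rᵢ` of `μᵢ`:
`σ(rᵢ) = r_{i+1}` (indices mod `n`). -/
def BuiltFrom {X : Type*} (lt : X → X → Prop) (μ : Fin n → X) (σ : Equiv.Perm (Fin n)) : Prop :=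
  ∀ i j : Fin n, rankOf lt μ i = j.val → (σ j).val = rankOf lt μ (finSucc i)

/-- `σ` consists of a single `n`-cycle. -/
def IsCyclicPerm (σ : Equiv.Perm (Fin n)) : Prop :=
  ∀ x y : Fin n, ∃ k : ℕ, (σ ^ k) x = y

/-- `σ` is unimodal: decreasing on an initial segment, then increasing. -/
def IsUnimodal (σ : Equiv.Perm (Fin n)) : Prop :=
  ∃ m : Fin n, (∀ i j : Fin n, i ≤ j → j ≤ m → σ j ≤ σ i) ∧
    (∀ i j : Fin n, m ≤ i → i ≤ j → σ i ≤ σ j)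

/-- Cyclic unimodal permutations. -/
def CUPperm (σ : Equiv.Perm (Fin n)) : Prop := IsCyclicPerm σ ∧ IsUnimodal σ

/-- The string `A(σ)` obtained from the itinerary of `σ` (`+ ↦ 0`, `− ↦ 1`),
with the last digit chosen so that the total number of 1's is even.
(Here `m = σ⁻¹ 0` is the unique element with `σ m` least.) -/
def Astr [NeZero n] (σ : Equiv.Perm (Fin n)) : Fin n → Bool :=
  fun i =>
    if i.val + 1 < n then decide ((σ ^ (i.val + 1)) (σ⁻¹ 0) < σ⁻¹ 0)
    else decide (Odd ((univ.filter (fun j : Fin n =>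
      j.val + 1 < n ∧ (σ ^ (j.val + 1)) (σ⁻¹ 0) < σ⁻¹ 0)).card))

/-- The string used for `Ψ(σ)`: itinerary digits with the last digit chosen
so that the total number of 1's is odd. -/
def BstrOdd [NeZero n] (σ : Equiv.Perm (Fin n)) : Fin n → Bool :=
  fun i =>
    if i.val + 1 < n then decide ((σ ^ (i.val + 1)) (σ⁻¹ 0) < σ⁻¹ 0)
    else !(decide (Odd ((univ.filter (fun j : Fin n =>
      j.val + 1 < n ∧ (σ ^ (j.val + 1)) (σ⁻¹ 0) < σ⁻¹ 0)).card)))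

/-- The itinerary of a cyclic unimodal permutation: `none` encodes `⋆` (position `n`),
`some true` encodes `−` (i.e. `σⁱ(m) < m`), `some false` encodes `+` (i.e. `σⁱ(m) > m`). -/
def itin [NeZero n] (σ : Equiv.Perm (Fin n)) : Fin n → Option Bool :=
  fun i =>
    if i.val + 1 = n then none
    else some (decide ((σ ^ (i.val + 1)) (σ⁻¹ 0) < σ⁻¹ 0))

/-- `σ` arises from the class `C` by the construction defining `λ`:
for some representative `t` of `C` beginning with `1`, `σ` is the cyclic permutation
built from the lexicographic ranks of the iterates of `t` under `F` (non-reflexive case)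
or of `t^−` under `F̃` (reflexive case). -/
def LamRel [NeZero n] (C : Set (Fin n → Bool)) (σ : Equiv.Perm (Fin n)) : Prop :=
  ∃ t : Fin n → Bool, t 0 = true ∧ C = invClass t ∧
    ((¬ ReflexiveStr t ∧ BuiltFrom strLt (fun i : Fin n => twistF^[i.val] t) σ) ∨
     (ReflexiveStr t ∧ BuiltFrom extLt (fun i : Fin n => extF^[i.val] (t, false)) σ))

/-- `σ` arises from the representative `s` by the Weiss–Rogers construction `Φ`:
`σ` is the cyclic permutation built from the lexicographic ranks of
`νᵢ = ι(Ξ(L^{i-1}(s)))`. -/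
def PhiBuilt (s : Fin n → Bool) (σ : Equiv.Perm (Fin n)) : Prop :=
  BuiltFrom strLt (fun i : Fin n => inv (xi (shiftL^[i.val] s))) σ

end Necklaces
namespace Necklaces

section AuxLemmas

variable {n : ℕ}

lemma shiftL_iter_apply (s : Fin n → Bool) (j : ℕ) (i : Fin n) :
    shiftL^[j] s i =
      s ⟨(i.val + j) % n, Nat.mod_lt _ (Nat.lt_of_le_of_lt (Nat.zero_le _) i.isLt)⟩ := by
  induction j generalizing i with
  | zero =>
    simp only [Function.iterate_zero, id_eq, Nat.add_zero]
    congr 1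
    exact Fin.ext (Nat.mod_eq_of_lt i.isLt).symm
  | succ j ih =>
    rw [Function.iterate_succ_apply']
    show shiftL (shiftL^[j] s) i = _
    simp only [shiftL]
    rw [ih]
    congr 1
    apply Fin.ext
    simp only [Nat.mod_add_mod]
    congr 1
    omega

lemma shiftL_iter_n (s : Fin n → Bool) : shiftL^[n] s = s := by
  funext i
  rw [shiftL_iter_apply]
  congr 1
  exact Fin.ext (by simp [Nat.add_mod_right, Nat.mod_eq_of_lt i.isLt])

lemma cyclic_orderOf [NeZero n] (σ : Equiv.Perm (Fin n)) (hcyc : IsCyclicPerm σ) :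
    orderOf σ = n := by
  have hn : 0 < n := Nat.pos_of_ne_zero (NeZero.ne n)
  rcases Nat.lt_or_ge n 2 with h2 | h2
  · have hn1 : n = 1 := by omega
    subst hn1
    have : σ = 1 := Subsingleton.elim σ 1
    simp [this]
  · have hmove : ∀ y : Fin n, σ y ≠ y := by
      intro y hy
      have hfix : ∀ k : ℕ, (σ ^ k) y = y := by
        intro k
        induction k with
        | zero => rfl
        | succ k ih => rw [pow_succ, Equiv.Perm.mul_apply, hy, ih]
      obtain ⟨z, hz⟩ : ∃ z : Fin n, z ≠ y := by
        rcases Decidable.eq_or_ne y 0 with h | h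
        · exact ⟨⟨1, by omega⟩, by simp [Fin.ext_iff, h]⟩
        · exact ⟨0, fun hh => h hh.symm⟩
      obtain ⟨k, hk⟩ := hcyc y z
      exact hz (by rw [← hk, hfix])
    have hcycle : σ.IsCycle := by
      refine ⟨0, hmove 0, fun y _ => ?_⟩
      obtain ⟨k, hk⟩ := hcyc 0 y
      exact ⟨(k : ℤ), by rw [zpow_natCast]; exact hk⟩
    have hsupp : σ.support = Finset.univ := by
      ext y
      simp [Equiv.Perm.mem_support, hmove y]
    rw [hcycle.orderOf, hsupp, Finset.card_univ, Fintype.card_fin]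

lemma cyclic_dvd_of_fix [NeZero n] (σ : Equiv.Perm (Fin n)) (hcyc : IsCyclicPerm σ)
    {d : ℕ} {x : Fin n} (h : (σ ^ d) x = x) : n ∣ d := by
  have h1 : σ ^ d = 1 := by
    ext y
    obtain ⟨k, hk⟩ := hcyc x y
    have : (σ ^ d) y = y := by
      rw [← hk, ← Equiv.Perm.mul_apply, ← pow_add, Nat.add_comm, pow_add,
        Equiv.Perm.mul_apply, h]
    exact congrArg Fin.val this

  rw [← cyclic_orderOf σ hcyc]
  exact orderOf_dvd_of_pow_eq_one h1

lemma turning [NeZero n] (σ : Equiv.Perm (Fin n)) (huni : IsUnimodal σ) :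
    (∀ a b : Fin n, a ≤ b → b ≤ σ⁻¹ 0 → σ b ≤ σ a) ∧
    (∀ a b : Fin n, σ⁻¹ 0 ≤ a → a ≤ b → σ a ≤ σ b) := by
  obtain ⟨m', h1, h2⟩ := huni
  have hm : m' = σ⁻¹ 0 := by
    have hmin : ∀ x, σ m' ≤ σ x := fun x => by
      rcases le_total x m' with h | h
      · exact h1 x m' h le_rfl
      · exact h2 m' x le_rfl h
    have h0 : σ m' ≤ 0 := by
      have := hmin (σ⁻¹ 0)
      rwa [show σ (σ⁻¹ 0) = 0 from σ.apply_symm_apply 0] at this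
    have h0' : σ m' = 0 := le_antisymm h0 (Fin.zero_le _)
    have := congrArg (fun z => σ⁻¹ z) h0'
    simpa using this
  constructor
  · intro a b hab hbm
    exact h1 a b hab (hm ▸ hbm)
  · intro a b hma hab
    exact h2 a b (hm ▸ hma) hab

lemma step_lemma [NeZero n] (σ : Equiv.Perm (Fin n)) (huni : IsUnimodal σ) {u v : Fin n} (huv : u ≠ v)
    (hd : (u < σ⁻¹ 0) ↔ (v < σ⁻¹ 0)) :
    (σ u < σ v ↔ (if u < σ⁻¹ 0 then v < u else u < v)) := by
  obtain ⟨hdec, hinc⟩ := turning σ huni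
  have hne : σ u ≠ σ v := fun h => huv (σ.injective h)
  by_cases hu : u < σ⁻¹ 0
  · have hv : v < σ⁻¹ 0 := hd.mp hu
    simp only [if_pos hu]
    constructor
    · intro h
      by_contra hvu
      have huv' : u < v := lt_of_le_of_ne (not_lt.mp hvu) huv
      exact absurd h (not_lt.mpr (hdec u v huv'.le hv.le))
    · intro h
      exact lt_of_le_of_ne (hdec v u h.le hu.le) hne
  · have hv : ¬ v < σ⁻¹ 0 := fun h => hu (hd.mpr h)
    simp only [if_neg hu]
    constructor
    · intro h
      by_contra hvu'
      have hvu : v < u := lt_of_le_of_ne (not_lt.mp hvu') (Ne.symm huv)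
      exact absurd h (not_lt.mpr (hinc v u (not_lt.mp hv) hvu.le))
    · intro h
      exact lt_of_le_of_ne (hinc u v (not_lt.mp hu) h.le) hne

lemma iter_step [NeZero n] (σ : Equiv.Perm (Fin n)) (huni : IsUnimodal σ) (N : ℕ) {u v : Fin n}
    (huv : u ≠ v)
    (hd : ∀ i, i < N → (((σ ^ i) u < σ⁻¹ 0) ↔ ((σ ^ i) v < σ⁻¹ 0))) :
    ((σ ^ N) u < (σ ^ N) v ↔
      (u < v ↔ Even (∑ i ∈ Finset.range N, if (σ ^ i) u < σ⁻¹ 0 then 1 else 0))) := by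
  induction N with
  | zero => simp
  | succ N ih =>
    have ihh := ih (fun i hi => hd i (Nat.lt_succ_of_lt hi))
    have hne : (σ ^ N) u ≠ (σ ^ N) v := fun h => huv ((σ ^ N).injective h)
    have hstep := step_lemma σ huni hne (hd N (Nat.lt_succ_self N))
    have hpow : ∀ w : Fin n, (σ ^ (N + 1)) w = σ ((σ ^ N) w) := fun w => by
      rw [pow_succ', Equiv.Perm.mul_apply]
    rw [Finset.sum_range_succ, hpow u, hpow v, hstep]
    by_cases hN : (σ ^ N) u < σ⁻¹ 0
    · simp only [if_pos hN]
      have key : ((σ ^ N) v < (σ ^ N) u) ↔ ¬ ((σ ^ N) u < (σ ^ N) v) :=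
        ⟨fun h hlt => absurd h (asymm hlt), fun h => (hne.lt_or_gt).resolve_left h⟩
      rw [key, ihh, Nat.even_add_one]
      tauto
    · simp only [if_neg hN, Nat.add_zero]
      rw [ihh]

end AuxLemmas

end Necklaces
namespace Necklaces

section CountLemmas

/-- Sum of Boolean indicators of `g` over the window `[s, s+L)`. -/
def indSum (g : ℕ → Bool) (s L : ℕ) : ℕ :=
  ∑ i ∈ Finset.range L, if g (s + i) = true then 1 else 0

lemma indSum_add (g : ℕ → Bool) (s a b : ℕ) :
    indSum g s (a + b) = indSum g s a + indSum g (s + a) b := by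
  induction b with
  | zero => simp [indSum]
  | succ b ih =>
    rw [show a + (b + 1) = (a + b) + 1 from rfl]
    unfold indSum at *
    rw [Finset.sum_range_succ, ih, Finset.sum_range_succ,
      show s + (a + b) = s + a + b by omega]
    omega

lemma indSum_shift (g : ℕ → Bool) (k : ℕ) (hg : ∀ i, g (i + k) = g i) (s : ℕ) :
    indSum g s k = indSum g 0 k := by
  induction s with
  | zero => rfl
  | succ s ih =>
    rw [← ih]
    unfold indSum
    have h1 := Finset.sum_range_succ (fun i => if g (s + i) = true then 1 else 0) k
    have h2 := Finset.sum_range_succ' (fun i => if g (s + i) = true then 1 else 0) k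
    have hgs : g (s + k) = g (s + 0) := by rw [Nat.add_zero]; exact hg s
    have h3 : ∑ i ∈ Finset.range k, (if g (s + 1 + i) = true then 1 else 0)
        = ∑ i ∈ Finset.range k, (if g (s + (i + 1)) = true then 1 else 0) :=
      Finset.sum_congr rfl (fun i _ => by rw [show s + 1 + i = s + (i + 1) by omega])
    simp only [hgs] at h1
    rw [h3]
    omega

lemma indSum_mul (g : ℕ → Bool) (k : ℕ) (hg : ∀ i, g (i + k) = g i) (s j : ℕ) :
    indSum g s (j * k) = j * indSum g 0 k := by
  induction j with
  | zero => simp [indSum]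
  | succ j ih =>
    rw [Nat.succ_mul, indSum_add, ih, indSum_shift g k hg (s + j * k), Nat.succ_mul]

end CountLemmas

section ParityLemma

variable {n : ℕ}

lemma even_onesCard [NeZero n] (σ : Equiv.Perm (Fin n)) : Even (onesCard (Astr σ)) := by
  obtain ⟨N, rfl⟩ : ∃ N, n = N + 1 :=
    ⟨n - 1, by have := Nat.pos_of_ne_zero (NeZero.ne n); omega⟩
  set Sc : ℕ := (Finset.univ.filter (fun j : Fin (N + 1) =>
      j.val + 1 < N + 1 ∧ (σ ^ (j.val + 1)) (σ⁻¹ 0) < σ⁻¹ 0)).card with hSc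
  set T : ℕ := ∑ i : Fin N, if (σ ^ (i.val + 1)) (σ⁻¹ 0) < σ⁻¹ 0 then 1 else 0 with hT
  have hi : ∀ i : Fin N, (i.castSucc).val + 1 < N + 1 := by
    intro i
    have := i.isLt
    simp only [Fin.coe_castSucc]
    omega
  have hlast : ¬ ((Fin.last N).val + 1 < N + 1) := by simp
  have hones : onesCard (Astr σ) = T + (if Odd Sc then 1 else 0) := by
    rw [onesCard, Finset.card_filter, Fin.sum_univ_castSucc]
    congr 1
    · apply Finset.sum_congr rfl
      intro i _
      simp [Astr, hi i]
    · simp [Astr, hlast, hSc]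
  have hScT : Sc = T := by
    rw [hSc, Finset.card_filter, Fin.sum_univ_castSucc, if_neg (by simp), Nat.add_zero, hT]
    apply Finset.sum_congr rfl
    intro i _
    simp [hi i]
  rw [hones, hScT]
  rcases Nat.even_or_odd T with h | h
  · simp [Nat.not_odd_iff_even.mpr h, h]
  · have : ¬ Even T := Nat.not_even_iff_odd.mpr h
    simp only [if_pos h]
    rcases h with ⟨c, hc⟩
    exact ⟨c + 1, by omega⟩

end ParityLemma

end Necklaces
namespace Necklaces

/-- For every cyclic unimodal permutation `σ` of `{1,…,n}`, the binary
string `A(σ)` is either primitive of length `n` with an even number of 1's, or consists of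
two copies of a primitive string of length `n/2` with an odd number of 1's; in other
words, the necklace `φ(σ) = ⟨A(σ)⟩` belongs to `Ñ⁺(n)`. -/
theorem Astr_goodPlus (n : ℕ) [NeZero n] (σ : Equiv.Perm (Fin n)) (hσ : CUPperm σ) :
    GoodPlus (Astr σ) ∧ necklace (Astr σ) ∈ NtildePlus n := by
  classical
  obtain ⟨hcyc, huni⟩ := hσ
  have hn : 0 < n := Nat.pos_of_ne_zero (NeZero.ne n)
  suffices hg : GoodPlus (Astr σ) from ⟨hg, ⟨Astr σ, hg, rfl⟩⟩
  by_cases hprim : Primitive (Astr σ)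
  · exact Or.inl ⟨hprim, even_onesCard σ⟩
  right
  -- basic orbit facts
  have hσn : σ ^ n = 1 := by
    have h := pow_orderOf_eq_one σ
    rwa [cyclic_orderOf σ hcyc] at h
  set X : ℕ → Fin n := fun i => (σ ^ i) (σ⁻¹ 0) with hX
  have hXadd : ∀ i j, (σ ^ i) (X j) = X (i + j) := by
    intro i j
    rw [hX]
    simp only
    rw [← Equiv.Perm.mul_apply, ← pow_add]
  have hXnq : ∀ q, X (n * q) = σ⁻¹ 0 := by
    intro q
    rw [hX]
    simp only [pow_mul, hσn, one_pow]
    rfl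
  have hXmod : ∀ i, X i = X (i % n) := by
    intro i
    conv_lhs => rw [show i = i % n + n * (i / n) from (Nat.mod_add_div i n).symm]
    rw [← hXadd (i % n) (n * (i / n)), hXnq]
  have hXinj : ∀ a b, a ≤ b → X a = X b → n ∣ (b - a) := by
    intro a b hab h
    apply cyclic_dvd_of_fix σ hcyc (x := X a)
    rw [hXadd (b - a) a, show b - a + a = b by omega]
    exact h.symm
  have hX1 : X 1 = 0 := by
    rw [hX]; simp only [pow_one]; exact σ.apply_symm_apply 0
  -- extract a minimal period k
  have hPex : ∃ k, 0 < k ∧ shiftL^[k] (Astr σ) = Astr σ := by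
    unfold Primitive at hprim
    push_neg at hprim
    obtain ⟨k, hk1, _, hk3⟩ := hprim
    exact ⟨k, hk1, hk3⟩
  have hkwit : ∃ k, (0 < k ∧ shiftL^[k] (Astr σ) = Astr σ) ∧ k < n := by
    unfold Primitive at hprim
    push_neg at hprim
    obtain ⟨k, hk1, hk2, hk3⟩ := hprim
    exact ⟨k, ⟨hk1, hk3⟩, hk2⟩
  obtain ⟨k, ⟨hkpos, hkA⟩, hkn, hkmin⟩ :
      ∃ k, (0 < k ∧ shiftL^[k] (Astr σ) = Astr σ) ∧ k < n ∧
        ∀ j, j < k → ¬(0 < j ∧ shiftL^[j] (Astr σ) = Astr σ) := by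
    refine ⟨Nat.find hPex, Nat.find_spec hPex, ?_, fun j hj => Nat.find_min hPex hj⟩
    obtain ⟨k', hk', hk'n⟩ := hkwit
    exact lt_of_le_of_lt (Nat.find_min' hPex hk') hk'n
  have hAmul : ∀ q, shiftL^[q * k] (Astr σ) = Astr σ := by
    intro q
    induction q with
    | zero => simp
    | succ q ih =>
      rw [Nat.succ_mul, Function.iterate_add_apply, hkA, ih]
  have hkdvd : k ∣ n := by
    have hrem : shiftL^[n % k] (Astr σ) = Astr σ := by
      have h1 : shiftL^[n % k + (n / k) * k] (Astr σ) = Astr σ := by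
        rw [show n % k + n / k * k = n from Nat.mod_add_div' n k]
        funext i
        rw [shiftL_iter_apply]
        congr 1
        exact Fin.ext (by simp [Nat.add_mod_right, Nat.mod_eq_of_lt i.isLt])
      rw [Function.iterate_add_apply, hAmul] at h1
      exact h1
    by_contra hnd
    have hne0 : n % k ≠ 0 := fun h => hnd (Nat.dvd_of_mod_eq_zero h)
    exact hkmin _ (Nat.mod_lt n hkpos) ⟨Nat.pos_of_ne_zero hne0, hrem⟩
  obtain ⟨r, hrk⟩ : ∃ r, r * k = n := ⟨n / k, Nat.div_mul_cancel hkdvd⟩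
  have hr2 : 2 ≤ r := by
    by_contra h
    push_neg at h
    have h01 : r = 0 ∨ r = 1 := by omega
    rcases h01 with h0 | h0 <;> rw [h0] at hrk <;> omega
  -- the near-itinerary string fb
  set fb : ℕ → Bool := fun i => Astr σ ⟨(i + n - 1) % n, Nat.mod_lt _ hn⟩ with hfb
  have hidx : ∀ i, (i + n - 1) % n = (i % n + n - 1) % n := by
    intro i
    conv_lhs => rw [show i + n - 1 = n * (i / n) + (i % n + n - 1) by
      have := Nat.mod_add_div i n; omega]
    rw [Nat.mul_add_mod]
  have hfbP : ∀ i, i % n ≠ 0 → (fb i = true ↔ X i < σ⁻¹ 0) := by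
    intro i hi
    have ht1 : 0 < i % n := Nat.pos_of_ne_zero hi
    have ht2 : i % n < n := Nat.mod_lt i hn
    have hidx2 : (i + n - 1) % n = i % n - 1 := by
      rw [hidx i, show i % n + n - 1 = (i % n - 1) + n by omega, Nat.add_mod_right,
        Nat.mod_eq_of_lt (by omega)]
    have hlt : (i % n - 1) + 1 < n := by omega
    rw [hfb]
    simp only
    rw [show (⟨(i + n - 1) % n, Nat.mod_lt _ hn⟩ : Fin n) = ⟨i % n - 1, by omega⟩ from
      Fin.ext hidx2]
    rw [Astr]
    simp only [hlt, if_pos, decide_eq_true_eq]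
    rw [show i % n - 1 + 1 = i % n by omega]
    rw [hXmod i]
  have hfbmod : ∀ i, fb i = fb (i % n) := by
    intro i
    rw [hfb]
    simp only
    congr 1
    exact Fin.ext (hidx i)
  have hfb_per : ∀ i, fb (i + k) = fb i := by
    intro i
    have h1 := shiftL_iter_apply (Astr σ) k ⟨(i + n - 1) % n, Nat.mod_lt _ hn⟩
    rw [hkA] at h1
    calc fb (i + k) = Astr σ ⟨(i + k + n - 1) % n, Nat.mod_lt _ hn⟩ := rfl
      _ = Astr σ ⟨((i + n - 1) % n + k) % n, Nat.mod_lt _ hn⟩ := by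
          congr 1
          apply Fin.ext
          simp only [Nat.mod_add_mod]
          congr 1
          omega
      _ = Astr σ ⟨(i + n - 1) % n, Nat.mod_lt _ hn⟩ := h1.symm
      _ = fb i := rfl
  have hfb_perMul : ∀ i j, fb (i + j * k) = fb i := by
    intro i j
    induction j with
    | zero => simp
    | succ j ih =>
      rw [Nat.succ_mul, show i + (j * k + k) = (i + j * k) + k by omega, hfb_per, ih]
  obtain ⟨H, hH⟩ : ∃ H, indSum fb 0 k = H := ⟨_, rfl⟩
  have hwin : ∀ s, indSum fb s k = H := fun s => (indSum_shift fb k hfb_per s).trans hH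
  have hmulH : ∀ s j, indSum fb s (j * k) = j * H := fun s j => by
    rw [indSum_mul fb k hfb_per s j, hH]
  -- sums of itinerary indicators are indSum's
  have hsum : ∀ s N, (∀ i, i < N → (s + i) % n ≠ 0) →
      (∑ i ∈ Finset.range N, if (σ ^ i) (X s) < σ⁻¹ 0 then 1 else 0) = indSum fb s N := by
    intro s N hcond
    unfold indSum
    apply Finset.sum_congr rfl
    intro i hi
    rw [hXadd i s, show i + s = s + i by omega]
    have h := hfbP (s + i) (hcond i (Finset.mem_range.mp hi))
    by_cases hc : X (s + i) < σ⁻¹ 0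
    · rw [if_pos hc, if_pos (h.mpr hc)]
    · rw [if_neg hc, if_neg (fun hh => hc (h.mp hh))]
  -- distinctness of the points X (1 + a*k)
  have hdist : ∀ a b : ℕ, a < b → b * k - a * k < n → X (1 + a * k) ≠ X (1 + b * k) := by
    intro a b hab hbn h
    have h1 : 1 + a * k ≤ 1 + b * k := by
      have := Nat.mul_le_mul_right k (le_of_lt hab)
      omega
    have h2 := hXinj _ _ h1 h
    rw [show 1 + b * k - (1 + a * k) = b * k - a * k by omega] at h2
    have hpos : 0 < b * k - a * k := by
      have h1 : (a + 1) * k = a * k + k := by rw [Nat.add_mul, Nat.one_mul]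
      have h2 : (a + 1) * k ≤ b * k := Nat.mul_le_mul_right k hab
      omega
    have := Nat.le_of_dvd hpos h2
    omega
  -- case split on the last digit
  have hmain : r = 2 ∧ Odd H := by
    by_cases hp : fb 0 = true
    · -- anomalous case: parity digit is 1
      have hb : ∀ b, 1 ≤ b → b ≤ r - 1 → Odd (b * H) := by
        intro b hb1 hb2
        have hbk : b * k + (r - b) * k = n := by
          have h := Nat.add_mul b (r - b) k
          rw [show b + (r - b) = r by omega, hrk] at h
          omega
        have hkbk : k ≤ b * k := Nat.le_mul_of_pos_left k (by omega)
        have hkrb : k ≤ (r - b) * k := Nat.le_mul_of_pos_left k (by omega)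
        obtain ⟨a, ha⟩ : ∃ a, a = r - b := ⟨_, rfl⟩
        rw [← ha] at hbk hkrb
        obtain ⟨N, hN⟩ : ∃ N, N = b * k - 1 := ⟨_, rfl⟩
        have huv : X 1 ≠ X (1 + a * k) := by
          have := hdist 0 a (by omega) (by omega)
          simpa using this
        have hdig : ∀ i, i < N →
            (((σ ^ i) (X 1) < σ⁻¹ 0) ↔ ((σ ^ i) (X (1 + a * k)) < σ⁻¹ 0)) := by
          intro i hi
          rw [hXadd i 1, hXadd i (1 + a * k)]
          rw [← hfbP (i + 1) (by rw [Nat.mod_eq_of_lt (by omega)]; omega),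
            ← hfbP (i + (1 + a * k)) (by rw [Nat.mod_eq_of_lt (by omega)]; omega)]
          rw [show i + (1 + a * k) = (i + 1) + a * k by omega, hfb_perMul (i + 1) a]
        have hiter := iter_step σ huni N huv hdig
        have hL1 : (σ ^ N) (X 1) = X (b * k) := by rw [hXadd]; congr 1; omega
        have hL2 : (σ ^ N) (X (1 + a * k)) = σ⁻¹ 0 := by
          rw [hXadd, show N + (1 + a * k) = n by omega]
          have h := hXnq 1
          rwa [Nat.mul_one] at h
        have hXbk : X (b * k) < σ⁻¹ 0 := by
          rw [← hfbP (b * k) (by rw [Nat.mod_eq_of_lt (by omega)]; omega)]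
          have h := hfb_perMul 0 b
          rw [Nat.zero_add] at h
          rw [h, hp]
        have hlt : X 1 < X (1 + a * k) := by
          rw [hX1]
          exact lt_of_le_of_ne (Fin.zero_le _) (by rw [← hX1]; exact huv)
        rw [hL1, hL2] at hiter
        have hEven := (hiter.mp hXbk).mp hlt
        rw [hsum 1 N (fun i hi => by rw [Nat.mod_eq_of_lt (by omega)]; omega)] at hEven
        have h0 : indSum fb 0 1 = 1 := by
          unfold indSum
          rw [Finset.sum_range_one]
          simp [hp]
        have h1 := indSum_add fb 0 1 N
        rw [show 1 + N = b * k by omega, hmulH 0 b, h0, Nat.zero_add] at h1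
        obtain ⟨c, hc⟩ := hEven
        refine ⟨c, ?_⟩
        rw [h1, hc]
        omega
      have hHodd : Odd H := by
        have h := hb 1 le_rfl (by omega)
        rwa [Nat.one_mul] at h
      refine ⟨?_, hHodd⟩
      by_contra hrne
      have hr3 : 3 ≤ r := by omega
      have h := hb 2 (by omega) (by omega)
      rw [Nat.two_mul] at h
      exact (Nat.not_odd_iff_even.mpr ⟨H, rfl⟩) h
    · -- fully periodic case: parity digit is 0
      have hp' : fb 0 = false := by
        cases h : fb 0
        · rfl
        · exact absurd h hp
      have hfAll : ∀ i, (fb i = true ↔ X i < σ⁻¹ 0) := by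
        intro i
        by_cases h : i % n = 0
        · rw [hfbmod i, h, hp']
          have hXi : X i = σ⁻¹ 0 := by
            rw [hXmod i, h]
            have := hXnq 0
            rwa [Nat.mul_zero] at this
          rw [hXi]
          simp
        · exact hfbP i h
      -- one k-step comparison propagation between two orbit points
      have hstep1 : ∀ a b : ℕ, X (1 + a * k) ≠ X (1 + b * k) →
          ((X (1 + (a + 1) * k) < X (1 + (b + 1) * k)) ↔
            ((X (1 + a * k) < X (1 + b * k)) ↔ Even H)) := by
        intro a b huv
        have hdig : ∀ i, i < k →
            (((σ ^ i) (X (1 + a * k)) < σ⁻¹ 0) ↔ ((σ ^ i) (X (1 + b * k)) < σ⁻¹ 0)) := by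
          intro i _
          rw [hXadd, hXadd, ← hfAll (i + (1 + a * k)), ← hfAll (i + (1 + b * k))]
          rw [show i + (1 + a * k) = (i + 1) + a * k by omega,
            show i + (1 + b * k) = (i + 1) + b * k by omega,
            hfb_perMul (i + 1) a, hfb_perMul (i + 1) b]
        have hiter := iter_step σ huni k huv hdig
        have hL1 : (σ ^ k) (X (1 + a * k)) = X (1 + (a + 1) * k) := by
          rw [hXadd]
          congr 1
          have h := Nat.add_mul a 1 k
          rw [Nat.one_mul] at h
          omega
        have hL2 : (σ ^ k) (X (1 + b * k)) = X (1 + (b + 1) * k) := by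
          rw [hXadd]
          congr 1
          have h := Nat.add_mul b 1 k
          rw [Nat.one_mul] at h
          omega
        rw [hL1, hL2] at hiter
        have hsum2 : (∑ i ∈ Finset.range k, if (σ ^ i) (X (1 + a * k)) < σ⁻¹ 0
            then 1 else 0) = indSum fb (1 + a * k) k := by
          unfold indSum
          apply Finset.sum_congr rfl
          intro i _
          rw [hXadd i (1 + a * k), show i + (1 + a * k) = (1 + a * k) + i by omega]
          have h := hfAll ((1 + a * k) + i)
          by_cases hc : X ((1 + a * k) + i) < σ⁻¹ 0
          · rw [if_pos hc, if_pos (h.mpr hc)]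
          · rw [if_neg hc, if_neg (fun hh => hc (h.mp hh))]
        rw [hsum2, hwin] at hiter
        exact hiter
      have hz0 : ∀ a, 1 ≤ a → a ≤ r - 1 → X 1 < X (1 + a * k) := by
        intro a ha1 ha2
        have hne : X 1 ≠ X (1 + a * k) := by
          have hkak : a * k ≤ (r - 1) * k := Nat.mul_le_mul_right k ha2
          have h1k : 1 * k = k := Nat.one_mul k
          have hsub : (r - 1) * k = r * k - 1 * k := Nat.sub_mul r 1 k
          have := hdist 0 a (by omega) (by omega)
          simpa using this
        rw [hX1]
        exact lt_of_le_of_ne (Fin.zero_le _) (by rw [← hX1]; exact hne)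
      have hn2' : 2 ≤ n := by
        have h2k : 2 * k ≤ r * k := Nat.mul_le_mul_right k hr2
        omega
      have hXr : X (1 + r * k) = 0 := by
        rw [hXmod, show (1 + r * k) % n = 1 % n by rw [hrk]; exact Nat.add_mod_right 1 n,
          Nat.mod_eq_of_lt (by omega), hX1]
      have hz1 : X (1 + 0 * k) = X 1 := by norm_num
      have hHodd : Odd H := by
        by_contra hev
        have hEvenH : Even H := Nat.not_odd_iff_even.mp hev
        have hne : X (1 + 0 * k) ≠ X (1 + (r - 1) * k) := by
          rw [hz1]
          exact (hz0 (r - 1) (by omega) (by omega)).ne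
        have h2 := (hstep1 0 (r - 1) hne).mpr
          (iff_of_true (by rw [hz1]; exact hz0 (r - 1) (by omega) (by omega)) hEvenH)
        rw [show r - 1 + 1 = r by omega, hXr] at h2
        exact absurd h2 (not_lt.mpr (Fin.zero_le _))
      refine ⟨?_, hHodd⟩
      by_contra hrne
      have hr3 : 3 ≤ r := by omega
      have hOddH : ¬ Even H := Nat.not_even_iff_odd.mpr hHodd
      have hne1 : X (1 + 0 * k) ≠ X (1 + (r - 2) * k) := by
        rw [hz1]
        exact (hz0 (r - 2) (by omega) (by omega)).ne
      have hn1 : ¬ (X (1 + (0 + 1) * k) < X (1 + (r - 2 + 1) * k)) := fun hlt =>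
        hOddH (((hstep1 0 (r - 2) hne1).mp hlt).mp
          (by rw [hz1]; exact hz0 (r - 2) (by omega) (by omega)))
      rw [Nat.zero_add, show r - 2 + 1 = r - 1 by omega] at hn1
      have hne2 : X (1 + 1 * k) ≠ X (1 + (r - 1) * k) := by
        apply hdist 1 (r - 1) (by omega)
        have hsub : (r - 1) * k = r * k - 1 * k := Nat.sub_mul r 1 k
        have h1k : 1 * k = k := Nat.one_mul k
        omega
      have hlt2 : X (1 + (r - 1) * k) < X (1 + 1 * k) := hne2.lt_or_gt.resolve_left hn1
      have h4 := (hstep1 1 (r - 1) hne2).mpr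
        (iff_of_false (fun hh => absurd hh (asymm hlt2)) hOddH)
      rw [show r - 1 + 1 = r by omega, hXr] at h4
      exact absurd h4 (not_lt.mpr (Fin.zero_le _))
  -- assemble TwoCopies
  obtain ⟨hreq, hHodd⟩ := hmain
  rw [hreq] at hrk
  have hn2 : n = k * 2 := by omega
  have hnd2 : n / 2 = k := by omega
  refine ⟨by omega, ?_, ?_, ?_⟩
  · rw [hnd2]
    exact hkA
  · intro k' hk'0 hk'n hEq
    rw [hnd2] at hk'n
    exact hkmin k' hk'n ⟨hk'0, hEq⟩
  · -- the count of ones in the first half is H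
    have hAi : ∀ i : Fin n, Astr σ i = fb (i.val + 1) := by
      intro i
      rw [hfb]
      simp only
      congr 1
      apply Fin.ext
      simp only
      rw [show i.val + 1 + n - 1 = i.val + n by omega, Nat.add_mod_right,
        Nat.mod_eq_of_lt i.isLt]
    have hcount : (Finset.univ.filter
        (fun i : Fin n => i.val < n / 2 ∧ Astr σ i = true)).card = H := by
      rw [hnd2, Finset.card_filter]
      have hterm : ∀ i : Fin n, (if i.val < k ∧ Astr σ i = true then 1 else 0)
          = (fun j : ℕ => if j < k ∧ fb (j + 1) = true then 1 else 0) i.val := by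
        intro i
        simp only [hAi i]
      rw [Finset.sum_congr rfl (fun i _ => hterm i)]
      rw [Fin.sum_univ_eq_sum_range (fun j => if j < k ∧ fb (j + 1) = true then 1 else 0) n]
      have hsplit : ∑ j ∈ Finset.range n,
          (if j < k ∧ fb (j + 1) = true then 1 else 0)
          = (∑ j ∈ Finset.range k, if j < k ∧ fb (j + 1) = true then 1 else 0)
            + ∑ j ∈ Finset.range (n - k),
                (if k + j < k ∧ fb (k + j + 1) = true then 1 else 0) := by
        conv_lhs => rw [show n = k + (n - k) by omega]
        rw [Finset.sum_range_add]
      rw [hsplit]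
      have hzero : ∑ j ∈ Finset.range (n - k),
          (if k + j < k ∧ fb (k + j + 1) = true then 1 else 0) = 0 := by
        apply Finset.sum_eq_zero
        intro j _
        rw [if_neg]
        rintro ⟨h1, _⟩
        omega
      rw [hzero, Nat.add_zero]
      have hfirst : ∑ j ∈ Finset.range k, (if j < k ∧ fb (j + 1) = true then 1 else 0)
          = indSum fb 1 k := by
        unfold indSum
        apply Finset.sum_congr rfl
        intro j hj
        have hjk := Finset.mem_range.mp hj
        rw [show 1 + j = j + 1 by omega]
        by_cases hc : fb (j + 1) = true
        · rw [if_pos ⟨hjk, hc⟩, if_pos hc]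
        · rw [if_neg (fun hh => hc hh.2), if_neg hc]
      rw [hfirst, hwin]
    rw [hcount]
    exact hHodd

end Necklaces
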